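/- For r ∈ {1/2, 1} and every λ ≥ 0, the Dirichlet eigenvalue counting function of the cylinder C_r satisfies W(λ) ≥ (πr/2)λ − (2r+1)√λ − 2. -/

import Mathlib

set_option maxHeartbeats 1000000

open Real

/-- Dirichlet eigenvalue counting function of the flat cylinder
`C_r = (0,π) × S¹_r`: eigenvalues are `m² + n²/r²`, `m ≥ 1`, `n ≥ 0`, with
multiplicity `1` if `n = 0` and `2` if `n ≥ 1`. -/
noncomputable def cylW (r lam : ℝ) : ℕ :=
  ∑ᶠ p : ℕ × ℕ,
    if 1 ≤ p.1 ∧ (p.1 : ℝ) ^ 2 + (p.2 : ℝ) ^ 2 / r ^ 2 < lam then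
      (if p.2 = 0 then 1 else 2) else 0

lemma aux_cont (lam : ℝ) : Continuous fun t : ℝ => Real.sqrt (lam - t ^ 2) :=
  Real.continuous_sqrt.comp (by continuity)

lemma aux_quarter : ∫ x in (0:ℝ)..1, Real.sqrt (1 - x ^ 2) = π / 4 := by
  have h := integral_sqrt_one_sub_sq
  have heq : (∫ x in (-1:ℝ)..0, Real.sqrt (1 - x ^ 2)) = ∫ x in (0:ℝ)..1, Real.sqrt (1 - x ^ 2) := by
    have h2 := intervalIntegral.integral_comp_neg (a := (0:ℝ)) (b := 1)
      (fun x => Real.sqrt (1 - x ^ 2))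
    simp only [neg_sq, neg_zero, neg_neg] at h2
    simpa using h2.symm
  have hint : ∀ a b : ℝ, IntervalIntegrable (fun x => Real.sqrt (1 - x ^ 2)) MeasureTheory.volume a b :=
    fun a b => (aux_cont 1).intervalIntegrable a b
  have hsplit := intervalIntegral.integral_add_adjacent_intervals
    (hint (-1) 0) (hint 0 1)
  rw [heq] at hsplit
  rw [h] at hsplit
  linarith

lemma aux_scaled (S : ℝ) (hS : 0 < S) :
    ∫ x in (0:ℝ)..S, Real.sqrt (S ^ 2 - x ^ 2) = S ^ 2 * (π / 4) := by
  have h := intervalIntegral.integral_comp_mul_left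
    (a := 0) (b := 1) (fun x => Real.sqrt (S ^ 2 - x ^ 2)) (ne_of_gt hS)
  simp only [mul_zero, mul_one] at h
  have hlhs : (∫ x in (0:ℝ)..1, Real.sqrt (S ^ 2 - (S * x) ^ 2))
      = ∫ x in (0:ℝ)..1, S * Real.sqrt (1 - x ^ 2) := by
    congr 1
    ext x
    have : S ^ 2 - (S * x) ^ 2 = S ^ 2 * (1 - x ^ 2) := by ring
    rw [this, Real.sqrt_mul (sq_nonneg S), Real.sqrt_sq hS.le]
  rw [hlhs, intervalIntegral.integral_const_mul, aux_quarter] at h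
  rw [smul_eq_mul, eq_inv_mul_iff_mul_eq₀ (ne_of_gt hS)] at h
  rw [← h]; ring

lemma aux_count (x : ℝ) (K : ℕ) (hx : 0 < x) (hxK : x ≤ (K : ℝ)) :
    2 * x - 1 ≤ ∑ n ∈ Finset.range K,
      (if (n : ℝ) < x then (if n = 0 then (1:ℝ) else 2) else 0) := by
  set N := ⌈x⌉₊ with hN
  have hN1 : 1 ≤ N := Nat.one_le_ceil_iff.mpr hx
  have hNK : N ≤ K := Nat.ceil_le.mpr hxK
  have hsub : Finset.range N ⊆ Finset.range K := Finset.range_subset_range.mpr hNK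
  have hstep : ∑ n ∈ Finset.range N,
      (if (n : ℝ) < x then (if n = 0 then (1:ℝ) else 2) else 0)
      ≤ ∑ n ∈ Finset.range K,
      (if (n : ℝ) < x then (if n = 0 then (1:ℝ) else 2) else 0) := by
    apply Finset.sum_le_sum_of_subset_of_nonneg hsub
    intro i _ _
    split_ifs <;> norm_num
  refine le_trans ?_ hstep
  have hval : ∀ n ∈ Finset.range N,
      (if (n : ℝ) < x then (if n = 0 then (1:ℝ) else 2) else 0)
      = 2 - (if n = 0 then (1:ℝ) else 0) := by
    intro n hn
    have : (n : ℝ) < x := Nat.lt_ceil.mp (Finset.mem_range.mp hn)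
    rw [if_pos this]
    split_ifs <;> norm_num
  rw [Finset.sum_congr rfl hval, Finset.sum_sub_distrib, Finset.sum_const,
    Finset.sum_ite_eq' (Finset.range N) 0 (fun _ => (1:ℝ)),
    if_pos (Finset.mem_range.mpr hN1), Finset.card_range, nsmul_eq_mul]
  have hxN : x ≤ (N : ℝ) := Nat.le_ceil x
  linarith

/-- for `r ∈ {1/2, 1}` and every `λ ≥ 0`,
`W(λ) ≥ (πr/2)λ − (2r+1)√λ − 2`. -/
theorem cylW_lower_bound (r : ℝ) (hr : r = 1 / 2 ∨ r = 1) (lam : ℝ) (hlam : 0 ≤ lam) :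
    (cylW r lam : ℝ) ≥ π * r / 2 * lam - (2 * r + 1) * Real.sqrt lam - 2 := by
  have hr0 : 0 < r := by rcases hr with h | h <;> rw [h] <;> norm_num
  have hr1 : r ≤ 1 := by rcases hr with h | h <;> rw [h] <;> norm_num
  have hsqnn : 0 ≤ Real.sqrt lam := Real.sqrt_nonneg lam
  by_cases hbig : π * r / 2 * lam ≤ 2
  · have h1 : 0 ≤ (2 * r + 1) * Real.sqrt lam := by positivity
    have h2 : (0:ℝ) ≤ (cylW r lam : ℝ) := Nat.cast_nonneg _
    linarith
  push_neg at hbig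
  have hpi := Real.pi_lt_d2
  have hpi0 := Real.pi_pos
  have hlam1 : 1 < lam := by
    by_contra h
    push_neg at h
    have h1 : π * r / 2 * lam ≤ π * r / 2 * 1 :=
      mul_le_mul_of_nonneg_left h (by positivity)
    nlinarith
  set S := Real.sqrt lam with hSdef
  have hSS : S ^ 2 = lam := Real.sq_sqrt hlam
  have hS1 : 1 ≤ S := by
    by_contra h
    push_neg at h
    nlinarith
  have hSlam : S ≤ lam := by nlinarith
  set K := ⌈lam⌉₊ with hK
  have hlamK : lam ≤ (K : ℝ) := Nat.le_ceil lam
  set f : ℕ × ℕ → ℕ := fun p =>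
    if 1 ≤ p.1 ∧ (p.1 : ℝ) ^ 2 + (p.2 : ℝ) ^ 2 / r ^ 2 < lam then
      (if p.2 = 0 then 1 else 2) else 0 with hf
  have hr2 : (0:ℝ) < r ^ 2 := by positivity
  have hsupp : Function.support f ⊆ ((Finset.range K ×ˢ Finset.range K : Finset (ℕ × ℕ)) : Set (ℕ × ℕ)) := by
    intro p hp
    simp only [Function.mem_support, hf] at hp
    by_cases hc : 1 ≤ p.1 ∧ (p.1 : ℝ) ^ 2 + (p.2 : ℝ) ^ 2 / r ^ 2 < lam
    · obtain ⟨hm1, hmlt⟩ := hc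
      have hn2 : (0:ℝ) ≤ (p.2 : ℝ) ^ 2 / r ^ 2 := by positivity
      have hm2 : (p.1 : ℝ) ^ 2 < lam := by linarith
      have hm1' : (1:ℝ) ≤ (p.1 : ℝ) := by exact_mod_cast hm1
      have hmK : (p.1 : ℝ) < (K : ℝ) := by nlinarith
      have hnK : (p.2 : ℝ) < (K : ℝ) := by
        have hr2le : r ^ 2 ≤ 1 := by nlinarith
        have hdiv : (p.2 : ℝ) ^ 2 ≤ (p.2 : ℝ) ^ 2 / r ^ 2 := by
          rw [le_div_iff₀ hr2]
          nlinarith [sq_nonneg (p.2 : ℝ)]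
        have hn2lt : (p.2 : ℝ) ^ 2 < lam := by nlinarith
        rcases Nat.eq_zero_or_pos p.2 with h0 | h1
        · rw [h0]; push_cast; linarith
        · have : (1:ℝ) ≤ (p.2 : ℝ) := by exact_mod_cast h1
          nlinarith
      simp only [Finset.coe_product, Set.mem_prod, Finset.mem_coe, Finset.mem_range]
      constructor <;> [exact_mod_cast hmK; exact_mod_cast hnK]
    · exact absurd (if_neg hc) hp
  have hWeq : cylW r lam = ∑ p ∈ Finset.range K ×ˢ Finset.range K, f p :=
    finsum_eq_sum_of_support_subset f hsupp
  have hcast : (cylW r lam : ℝ) = ∑ m ∈ Finset.range K, ∑ n ∈ Finset.range K, (f (m, n) : ℝ) := by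
    rw [hWeq, Finset.sum_product]
    push_cast
    rfl
  -- inner bound
  set M' := ⌈S⌉₊ with hM'
  have hM'2 : 2 ≤ M' := by
    have : (1:ℝ) < S := by
      nlinarith
    exact Nat.add_one_le_ceil_iff.mpr (by exact_mod_cast this)
  have hM'K : M' ≤ K := Nat.ceil_le_ceil hSlam
  have hIcoSub : Finset.Ico 1 M' ⊆ Finset.range K := by
    intro m hm
    rw [Finset.mem_Ico] at hm
    rw [Finset.mem_range]
    exact lt_of_lt_of_le hm.2 hM'K
  have hinner_nonneg : ∀ m ∈ Finset.range K, (0:ℝ) ≤ ∑ n ∈ Finset.range K, (f (m, n) : ℝ) :=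
    fun m _ => Finset.sum_nonneg fun n _ => Nat.cast_nonneg _
  have hkey : ∀ m ∈ Finset.Ico 1 M',
      2 * r * Real.sqrt (lam - (m : ℝ) ^ 2) - 1 ≤ ∑ n ∈ Finset.range K, (f (m, n) : ℝ) := by
    intro m hm
    rw [Finset.mem_Ico] at hm
    have hm1 : 1 ≤ m := hm.1
    have hmS : (m : ℝ) < S := Nat.lt_ceil.mp hm.2
    have hm0 : (0:ℝ) ≤ (m : ℝ) := Nat.cast_nonneg m
    have hm2 : (m : ℝ) ^ 2 < lam := by nlinarith
    set x := r * Real.sqrt (lam - (m : ℝ) ^ 2) with hxdef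
    have hsq : Real.sqrt (lam - (m : ℝ) ^ 2) ^ 2 = lam - (m : ℝ) ^ 2 :=
      Real.sq_sqrt (by linarith)
    have hx0 : 0 < x := by
      apply mul_pos hr0
      exact Real.sqrt_pos.mpr (by linarith)
    have hsle : Real.sqrt (lam - (m : ℝ) ^ 2) ≤ S := by
      apply Real.sqrt_le_sqrt
      nlinarith [sq_nonneg ((m:ℝ))]
    have hxK : x ≤ (K : ℝ) := by nlinarith [Real.sqrt_nonneg (lam - (m:ℝ)^2)]
    have hcond : ∀ n : ℕ, (f (m, n) : ℝ)
        = if (n : ℝ) < x then (if n = 0 then (1:ℝ) else 2) else 0 := by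
      intro n
      have hiff : (1 ≤ m ∧ (m : ℝ) ^ 2 + (n : ℝ) ^ 2 / r ^ 2 < lam) ↔ (n : ℝ) < x := by
        constructor
        · rintro ⟨-, h⟩
          have h' : (n : ℝ) ^ 2 / r ^ 2 < lam - (m : ℝ) ^ 2 := by linarith
          rw [div_lt_iff₀ hr2] at h'
          have hn2 : (n : ℝ) ^ 2 < x ^ 2 := by
            rw [hxdef, mul_pow, hsq]
            nlinarith
          nlinarith [Nat.cast_nonneg (α := ℝ) n, hx0]
        · intro h
          refine ⟨hm1, ?_⟩
          have hn2 : (n : ℝ) ^ 2 < x ^ 2 := by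
            nlinarith [Nat.cast_nonneg (α := ℝ) n]
          rw [hxdef, mul_pow, hsq] at hn2
          have h' : (n : ℝ) ^ 2 / r ^ 2 < lam - (m : ℝ) ^ 2 := by
            rw [div_lt_iff₀ hr2]
            nlinarith
          linarith
      simp only [hf]
      by_cases h : (n : ℝ) < x
      · rw [if_pos (hiff.mpr h), if_pos h]
        split_ifs <;> norm_num
      · rw [if_neg (fun hc => h (hiff.mp hc)), if_neg h]
        norm_num
    calc 2 * r * Real.sqrt (lam - (m : ℝ) ^ 2) - 1 = 2 * x - 1 := by rw [hxdef]; ring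
      _ ≤ ∑ n ∈ Finset.range K, (if (n : ℝ) < x then (if n = 0 then (1:ℝ) else 2) else 0) :=
          aux_count x K hx0 hxK
      _ = ∑ n ∈ Finset.range K, (f (m, n) : ℝ) := by
          exact Finset.sum_congr rfl fun n _ => (hcond n).symm
  have hstep1 : ∑ m ∈ Finset.Ico 1 M', (2 * r * Real.sqrt (lam - (m : ℝ) ^ 2) - 1)
      ≤ (cylW r lam : ℝ) := by
    rw [hcast]
    calc ∑ m ∈ Finset.Ico 1 M', (2 * r * Real.sqrt (lam - (m : ℝ) ^ 2) - 1)
        ≤ ∑ m ∈ Finset.Ico 1 M', ∑ n ∈ Finset.range K, (f (m, n) : ℝ) :=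
          Finset.sum_le_sum hkey
      _ ≤ ∑ m ∈ Finset.range K, ∑ n ∈ Finset.range K, (f (m, n) : ℝ) :=
          Finset.sum_le_sum_of_subset_of_nonneg hIcoSub
            (fun m hm _ => hinner_nonneg m hm)
  -- now the integral comparison
  set M := M' - 1 with hM
  have hM1 : 1 ≤ M := by omega
  have hMM' : M' = M + 1 := by omega
  have hMcast : ((M : ℝ) + 1) = (M' : ℝ) := by rw [hMM']; push_cast; ring
  have hMleS : (M : ℝ) ≤ S := by
    have h1 : (M' : ℝ) < S + 1 := Nat.ceil_lt_add_one (by linarith)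
    linarith [hMcast]
  have hSleM1 : S ≤ (M : ℝ) + 1 := by rw [hMcast]; exact Nat.le_ceil S
  have hint : ∀ a b : ℝ, IntervalIntegrable (fun t => Real.sqrt (lam - t ^ 2))
      MeasureTheory.volume a b := fun a b => (aux_cont lam).intervalIntegrable a b
  have hanti : AntitoneOn (fun t : ℝ => Real.sqrt (lam - t ^ 2)) (Set.Icc 1 (1 + (M : ℝ))) := by
    intro a ha b hb hab
    apply Real.sqrt_le_sqrt
    have ha1 : (1:ℝ) ≤ a := ha.1
    nlinarith
  have hintsum := AntitoneOn.integral_le_sum (x₀ := 1) (a := M)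
    (f := fun t : ℝ => Real.sqrt (lam - t ^ 2)) hanti
  -- integral from 1 to 1 + M equals integral 1..S (tail vanishes)
  have htail : (∫ t in S..(1 + (M : ℝ)), Real.sqrt (lam - t ^ 2)) = 0 := by
    rw [intervalIntegral.integral_congr (g := fun _ => (0:ℝ)), intervalIntegral.integral_zero]
    intro t ht
    rw [Set.uIcc_of_le (by linarith)] at ht
    have htS : S ≤ t := ht.1
    apply Real.sqrt_eq_zero'.mpr
    nlinarith
  have hsplit1 := intervalIntegral.integral_add_adjacent_intervals
    (hint 1 S) (hint S (1 + (M : ℝ)))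
  have hsplit2 := intervalIntegral.integral_add_adjacent_intervals
    (hint 0 1) (hint 1 S)
  have hfull : (∫ t in (0:ℝ)..S, Real.sqrt (lam - t ^ 2)) = lam * (π / 4) := by
    have := aux_scaled S (by linarith)
    rw [hSS] at this
    rw [← hSS]
    simpa [hSS] using this
  have hfirst : (∫ t in (0:ℝ)..1, Real.sqrt (lam - t ^ 2)) ≤ S := by
    have hmono : (∫ t in (0:ℝ)..1, Real.sqrt (lam - t ^ 2)) ≤ ∫ _ in (0:ℝ)..1, S := by
      apply intervalIntegral.integral_mono_on (by norm_num) (hint 0 1)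
        (intervalIntegrable_const)
      intro t ht
      have h1 : Real.sqrt (lam - t ^ 2) ≤ Real.sqrt lam :=
        Real.sqrt_le_sqrt (by nlinarith [ht.1])
      rw [hSdef]
      exact h1
    simpa using hmono
  have hIval : lam * (π / 4) - S ≤ ∫ t in (1:ℝ)..(1 + (M : ℝ)), Real.sqrt (lam - t ^ 2) := by
    have h1S : (∫ t in (1:ℝ)..S, Real.sqrt (lam - t ^ 2))
        = lam * (π / 4) - ∫ t in (0:ℝ)..1, Real.sqrt (lam - t ^ 2) := by
      rw [← hfull, ← hsplit2]; ring
    have h1M : (∫ t in (1:ℝ)..(1 + (M : ℝ)), Real.sqrt (lam - t ^ 2))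
        = ∫ t in (1:ℝ)..S, Real.sqrt (lam - t ^ 2) := by
      rw [← hsplit1, htail, add_zero]
    rw [h1M, h1S]
    linarith
  -- sum over Ico equals sum over range
  have hsum_eq : ∑ m ∈ Finset.Ico 1 M', Real.sqrt (lam - (m : ℝ) ^ 2)
      = ∑ i ∈ Finset.range M, Real.sqrt (lam - ((1 : ℝ) + (i : ℝ)) ^ 2) := by
    rw [Finset.sum_Ico_eq_sum_range]
    apply Finset.sum_congr rfl
    intro i _
    push_cast
    norm_num
  have hsum_ge : lam * (π / 4) - S ≤ ∑ m ∈ Finset.Ico 1 M', Real.sqrt (lam - (m : ℝ) ^ 2) := by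
    rw [hsum_eq]
    refine le_trans hIval (le_trans hintsum ?_)
    apply le_of_eq
    apply Finset.sum_congr rfl
    intro i _
    norm_num
  have hcard : (Finset.Ico 1 M').card = M := by rw [Nat.card_Ico]
  have hfinal : ∑ m ∈ Finset.Ico 1 M', (2 * r * Real.sqrt (lam - (m : ℝ) ^ 2) - 1)
      = 2 * r * (∑ m ∈ Finset.Ico 1 M', Real.sqrt (lam - (m : ℝ) ^ 2)) - M := by
    rw [Finset.sum_sub_distrib, Finset.sum_const, ← Finset.mul_sum, hcard]
    push_cast
    ring
  have : 2 * r * (lam * (π / 4) - S) - (M : ℝ)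
      ≤ ∑ m ∈ Finset.Ico 1 M', (2 * r * Real.sqrt (lam - (m : ℝ) ^ 2) - 1) := by
    rw [hfinal]
    have h2r : 0 ≤ 2 * r := by linarith
    nlinarith [hsum_ge]
  have hlast : π * r / 2 * lam - (2 * r + 1) * S - 2 ≤ 2 * r * (lam * (π / 4) - S) - (M : ℝ) := by
    nlinarith [hMleS]
  linarith [hstep1, this, hlast]
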